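/- For every finite simple graph G with at least one vertex there exists a proper coloring c of G such that the minimum cardinality of an up-color dominating c-set of G equals the domination number γ(G); that is, there exists an up-color dominating c-set of size γ(G), and every up-color dominating c-set has size at least γ(G). -/
import Mathlib


/-- `D` is an up-color dominating `c`-set of `G`. -/
def IsUCDomSet {V : Type*} (G : SimpleGraph V) (c : V → ℕ) (D : Finset V) : Prop :=
  (∀ v ∉ D, ∃ d ∈ D, G.Adj v d ∧ c v < c d) ∧ ∀ d ∈ D, 1 ≤ c d

/-- `D` is a dominating set of `G`. -/
def IsDomSet {V : Type*} (G : SimpleGraph V) (D : Finset V) : Prop :=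
  ∀ v ∉ D, ∃ d ∈ D, G.Adj v d

/-- The domination number of `G`. -/
noncomputable def domNum (V : Type*) [Fintype V] (G : SimpleGraph V) : ℕ :=
  sInf {n | ∃ D : Finset V, IsDomSet G D ∧ D.card = n}

theorem stmt_3 {V : Type*} [Fintype V] [Nonempty V] (G : SimpleGraph V) :
    ∃ c : V → ℕ, (∀ ⦃u v⦄, G.Adj u v → c u ≠ c v) ∧
      (∃ D : Finset V, IsUCDomSet G c D ∧ D.card = domNum V G) ∧
      (∀ D : Finset V, IsUCDomSet G c D → domNum V G ≤ D.card) := by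
  classical
  have hne : {n | ∃ D : Finset V, IsDomSet G D ∧ D.card = n}.Nonempty := by
    refine ⟨Fintype.card V, Finset.univ, ?_, by simp⟩
    intro v hv; exact absurd (Finset.mem_univ v) hv
  obtain ⟨D₀, hD₀dom, hD₀card⟩ := Nat.sInf_mem hne
  set g : V → ℕ := fun v => (Fintype.equivFin V v : ℕ) with hg
  have hglt : ∀ v, g v < Fintype.card V := fun v => (Fintype.equivFin V v).2
  have hginj : Function.Injective g := fun a b h => by
    exact (Fintype.equivFin V).injective (Fin.ext h)
  set c : V → ℕ := fun v => if v ∈ D₀ then Fintype.card V + 1 + g v else 1 + g v with hc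
  have hcinj : Function.Injective c := by
    intro a b h
    simp only [hc] at h
    by_cases ha : a ∈ D₀ <;> by_cases hb : b ∈ D₀ <;> simp [ha, hb] at h
    · exact hginj h
    · have := hglt b; omega
    · have := hglt a; omega
    · exact hginj h
  have hlow : ∀ v, v ∉ D₀ → c v ≤ Fintype.card V := by
    intro v hv; simp only [hc, if_neg hv]; have := hglt v; omega
  have hhigh : ∀ d, d ∈ D₀ → Fintype.card V + 1 ≤ c d := by
    intro d hd; simp only [hc, if_pos hd]; omega
  refine ⟨c, ?_, ⟨D₀, ⟨?_, ?_⟩, hD₀card⟩, ?_⟩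
  · intro u v huv h
    exact G.ne_of_adj huv (hcinj h)
  · intro v hv
    obtain ⟨d, hd, hadj⟩ := hD₀dom v hv
    exact ⟨d, hd, hadj, lt_of_le_of_lt (hlow v hv) (lt_of_lt_of_le (Nat.lt_succ_self _) (hhigh d hd))⟩
  · intro d hd
    have := hhigh d hd
    have : 0 < Fintype.card V := Fintype.card_pos
    omega
  · intro D hD
    exact Nat.sInf_le ⟨D, fun v hv => (hD.1 v hv).imp (fun d hd => ⟨hd.1, hd.2.1⟩), rfl⟩
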